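/- Let S be a commutative, cancellative monoid such that L(s) is finite for all s ∈ S, and let m ∈ 𝒜(S). Then L(s + m) = L(s) + 1 for all s ∈ S if and only if L(φ_S(c_a)) = L(−m + φ_S(c_a)) + 1 for all (c_a) ∈ MinRepl_m(S). -/

import Mathlib

namespace Paper

/-- The additive congruence on `S` identifying associate elements
(`s ∼ t` iff `s + u = t` for some additive unit `u`). -/
def assocCon (S : Type*) [AddCancelCommMonoid S] : AddCon S where
  r s t := ∃ u : AddUnits S, s + (u : S) = t
  iseqv := by
    refine ⟨fun s => ⟨0, by simp⟩, ?_, ?_⟩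
    · rintro s t ⟨u, rfl⟩
      exact ⟨-u, by rw [add_assoc, AddUnits.add_neg, add_zero]⟩
    · rintro s t w ⟨u, rfl⟩ ⟨v, rfl⟩
      exact ⟨u + v, by rw [AddUnits.val_add, add_assoc]⟩
  add' := by
    rintro a b c d ⟨u, rfl⟩ ⟨v, rfl⟩
    refine ⟨u + v, ?_⟩
    rw [AddUnits.val_add]
    abel

/-- The reduced monoid `S_red = S / U(S)`. -/
abbrev Red (S : Type*) [AddCancelCommMonoid S] := (assocCon S).Quotient

variable {S : Type*} [AddCancelCommMonoid S]

/-- The class `[s]` of `s` in `S_red`. -/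
def cls (s : S) : Red S := (assocCon S).mk' s

/-- `a` is an atom: a nonzero nonunit such that in any decomposition
`b + c = a`, one of `b`, `c` is a unit. -/
def IsAddAtom {M : Type*} [AddMonoid M] (a : M) : Prop :=
  a ≠ 0 ∧ ¬ IsAddUnit a ∧ ∀ b c : M, b + c = a → IsAddUnit b ∨ IsAddUnit c

/-- The length `|(c_a)|` of a tuple. -/
def flen (c : Red S →₀ ℕ) : ℕ := c.sum fun _ n => n

/-- The factorization homomorphism `φ_S`. -/
def phi (c : Red S →₀ ℕ) : Red S := c.sum fun x n => n • x

/-- The set of factorizations `Z(s)`: finitely supported tuples indexed by the atoms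
of `S_red` summing to `[s]`. -/
def ZSet (s : S) : Set (Red S →₀ ℕ) :=
  {c | (∀ x ∈ c.support, IsAddAtom x) ∧ phi c = cls s}

/-- The longest factorization length `L(s)`. -/
noncomputable def lenL (s : S) : ℕ := sSup (flen '' ZSet s)

/-- The shortest factorization length `ℓ(s)`. -/
noncomputable def lenl (s : S) : ℕ := sInf (flen '' ZSet s)

/-- `L(s)` is (defined and) finite. -/
def LFinite (s : S) : Prop := (ZSet s).Nonempty ∧ BddAbove (flen '' ZSet s)

/-- `Repl_m(S)`: tuples over the atoms of `S_red` other than `[m]` whose evaluation,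
after subtracting `m`, stays in `S`. -/
def ReplSet (m : S) : Set (Red S →₀ ℕ) :=
  {c | (∀ x ∈ c.support, IsAddAtom x ∧ x ≠ cls m) ∧ ∃ s t : S, cls s = phi c ∧ m + t = s}

/-- `MinRepl_m(S)`: the minimal elements of `Repl_m(S)` under the coordinatewise order. -/
def MinReplSet (m : S) : Set (Red S →₀ ℕ) :=
  {c ∈ ReplSet m | ∀ c' ∈ ReplSet m, c' ≤ c → c' = c}

section Aux

lemma cls_eq_coe (s : S) : cls s = ((s : Red S)) := rfl

lemma cls_add (a b : S) : cls (a + b) = cls a + cls b := by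
  simp [cls]

lemma cls_eq_iff {a b : S} : cls a = cls b ↔ ∃ u : AddUnits S, a + (u : S) = b := by
  constructor
  · intro h
    exact (assocCon S).eq.mp h
  · intro h
    exact (assocCon S).eq.mpr h

lemma cls_surj (x : Red S) : ∃ a : S, cls a = x := Quot.exists_rep x

lemma red_cancel {a : S} {x y : Red S} (h : cls a + x = cls a + y) : x = y := by
  obtain ⟨b, rfl⟩ := cls_surj x
  obtain ⟨c, rfl⟩ := cls_surj y
  rw [← cls_add, ← cls_add] at h
  obtain ⟨u, hu⟩ := cls_eq_iff.mp h
  refine cls_eq_iff.mpr ⟨u, ?_⟩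
  have : a + (b + (u : S)) = a + c := by rw [← hu]; abel
  exact add_left_cancel this

lemma cls_of_isAddUnit {u : S} (h : IsAddUnit u) : cls u = 0 := by
  obtain ⟨v, rfl⟩ := h
  have : cls ((v : S)) = cls 0 := cls_eq_iff.mpr ⟨-v, by simp⟩
  simpa [cls] using this

lemma isAddAtom_cls {m : S} (hm : IsAddAtom m) : IsAddAtom (cls m) := by
  obtain ⟨hne, hnu, hatom⟩ := hm
  refine ⟨?_, ?_, ?_⟩
  · intro h
    have : cls m = cls (0 : S) := by simpa [cls] using h
    obtain ⟨u, hu⟩ := cls_eq_iff.mp this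
    exact hnu ⟨⟨m, u, by simpa using hu, by rw [add_comm]; simpa using hu⟩, rfl⟩
  · intro h
    obtain ⟨v, hv⟩ := h
    obtain ⟨a, ha⟩ := cls_surj (((-v : AddUnits (Red S))) : Red S)
    have hv' : cls (m + a) = 0 := by
      rw [cls_add, ha, ← hv]; simp
    have : cls (m + a) = cls (0 : S) := by simpa [cls] using hv'
    obtain ⟨u, hu⟩ := cls_eq_iff.mp this
    have : m + (a + (u : S)) = 0 := by rw [← hu]; abel
    exact hnu (IsAddUnit.of_add_eq_zero (a + (u : S)) this)
  · intro b c hbc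
    obtain ⟨x, rfl⟩ := cls_surj b
    obtain ⟨y, rfl⟩ := cls_surj c
    rw [← cls_add] at hbc
    obtain ⟨u, hu⟩ := cls_eq_iff.mp hbc
    have hx : x + (y + (u : S)) = m := by rw [← hu]; abel
    rcases hatom x (y + (u : S)) hx with h | h
    · left
      rw [cls_of_isAddUnit h]
      exact isAddUnit_zero
    · right
      have : cls (y + (u : S)) = 0 := cls_of_isAddUnit h
      rw [cls_add] at this
      have hu0 : cls ((u : S)) = 0 := cls_of_isAddUnit ⟨u, rfl⟩
      rw [hu0, add_zero] at this
      rw [this]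
      exact isAddUnit_zero

lemma phi_add (a b : Red S →₀ ℕ) : phi (a + b) = phi a + phi b := by
  unfold phi
  exact Finsupp.sum_add_index' (fun x => zero_smul ℕ x) (fun x m n => add_smul m n x)

lemma phi_single (x : Red S) (n : ℕ) : phi (Finsupp.single x n) = n • x := by
  unfold phi
  exact Finsupp.sum_single_index (zero_smul ℕ x)

lemma flen_add (a b : Red S →₀ ℕ) : flen (a + b) = flen a + flen b := by
  unfold flen
  exact Finsupp.sum_add_index' (fun _ => rfl) (fun _ _ _ => rfl)

lemma flen_single (x : Red S) (n : ℕ) : flen (Finsupp.single x n) = n := by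
  unfold flen
  exact Finsupp.sum_single_index rfl

lemma flen_eq_zero {c : Red S →₀ ℕ} (h : flen c = 0) : c = 0 := by
  unfold flen Finsupp.sum at h
  rw [Finset.sum_eq_zero_iff] at h
  ext a
  by_cases ha : a ∈ c.support
  · exact absurd (h a ha) (Finsupp.mem_support_iff.mp ha)
  · simpa using Finsupp.notMem_support_iff.mp ha

lemma le_exists_add {c z : Red S →₀ ℕ} (h : c ≤ z) : ∃ d, z = c + d := by
  refine ⟨z - c, ?_⟩
  ext a
  have := Finsupp.le_def.mp h a
  simp only [Finsupp.add_apply, Finsupp.tsub_apply]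
  omega

lemma support_subset_of_add {c d z : Red S →₀ ℕ} (h : z = c + d) :
    d.support ⊆ z.support := by
  intro x hx
  rw [Finsupp.mem_support_iff] at hx ⊢
  rw [h, Finsupp.add_apply]
  omega

lemma support_subset_of_add' {c d z : Red S →₀ ℕ} (h : z = c + d) :
    c.support ⊆ z.support := by
  intro x hx
  rw [Finsupp.mem_support_iff] at hx ⊢
  rw [h, Finsupp.add_apply]
  omega

lemma exists_max {s : S} (hfin : LFinite s) :
    ∃ z ∈ ZSet s, flen z = lenL s := by
  obtain ⟨⟨c, hc⟩, hbdd⟩ := hfin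
  have hne : (flen '' ZSet s).Nonempty := ⟨flen c, ⟨c, hc, rfl⟩⟩
  obtain ⟨z, hz, hz'⟩ := Nat.sSup_mem hne hbdd
  exact ⟨z, hz, hz'⟩

lemma le_lenL {s : S} (hfin : LFinite s) {z : Red S →₀ ℕ} (hz : z ∈ ZSet s) :
    flen z ≤ lenL s :=
  le_csSup hfin.2 ⟨z, hz, rfl⟩

end Aux

theorem statement4 {S : Type*} [AddCancelCommMonoid S] (m : S)
    (hm : IsAddAtom m) (hfin : ∀ s : S, LFinite s) :
    (∀ s : S, lenL (s + m) = lenL s + 1) ↔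
      (∀ c ∈ MinReplSet m, ∀ s t : S, cls s = phi c → m + t = s → lenL s = lenL t + 1) := by
  classical
  have hmred : IsAddAtom (cls m) := isAddAtom_cls hm
  constructor
  · intro H c _hc s t _hcs hmt
    rw [← hmt, add_comm m t]
    exact H t
  · intro H s
    refine le_antisymm ?_ ?_
    · -- lenL (s + m) ≤ lenL s + 1
      obtain ⟨z, hz, hzlen⟩ := exists_max (hfin (s + m))
      rw [← hzlen]
      by_cases hzm : cls m ∈ z.support
      · -- z contains the atom [m]
        have hle : Finsupp.single (cls m) 1 ≤ z := by
          rw [Finsupp.single_le_iff]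
          exact Nat.one_le_iff_ne_zero.mpr (Finsupp.mem_support_iff.mp hzm)
        obtain ⟨z', hz'⟩ := le_exists_add hle
        have hphi : phi z' = cls s := by
          apply red_cancel (a := m)
          have h1 : phi z = cls m + phi z' := by
            rw [hz', phi_add, phi_single, one_smul]
          rw [← h1, hz.2, ← cls_add, add_comm s m, cls_add]
        have hz'mem : z' ∈ ZSet s := by
          refine ⟨fun x hx => hz.1 x (support_subset_of_add hz' hx), hphi⟩
        have : flen z = flen z' + 1 := by
          rw [hz', flen_add, flen_single, add_comm]
        rw [this]
        exact Nat.add_le_add_right (le_lenL (hfin s) hz'mem) 1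
      · -- z avoids the atom [m]; use the replacement hypothesis
        have hzR : z ∈ ReplSet m := by
          refine ⟨fun x hx => ⟨hz.1 x hx, ?_⟩, s + m, s, hz.2.symm, add_comm m s⟩
          rintro rfl; exact hzm hx
        -- choose a flen-minimal element of ReplSet below z
        set T : Set ℕ := {n | ∃ c, c ∈ ReplSet m ∧ c ≤ z ∧ flen c = n} with hT
        have hTne : T.Nonempty := ⟨flen z, z, hzR, le_refl z, rfl⟩
        obtain ⟨c, hcR, hcz, hcflen⟩ := Nat.sInf_mem hTne
        have hcmin : c ∈ MinReplSet m := by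
          refine ⟨hcR, fun c' hc'R hc'c => ?_⟩
          obtain ⟨d, hd⟩ := le_exists_add hc'c
          have hflen : flen c = flen c' + flen d := by rw [hd, flen_add]
          have h1 : flen c ≤ flen c' :=
            hcflen ▸ Nat.sInf_le ⟨c', hc'R, le_trans hc'c hcz, rfl⟩
          have hd0 : d = 0 := flen_eq_zero (by omega)
          rw [hd, hd0, add_zero]
        obtain ⟨s₀, t₀, hs₀, ht₀⟩ := hcR.2
        have hL : lenL s₀ = lenL t₀ + 1 := H c hcmin s₀ t₀ hs₀ ht₀
        have hcZ : c ∈ ZSet s₀ := ⟨fun x hx => (hcR.1 x hx).1, hs₀.symm⟩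
        obtain ⟨d, hd⟩ := le_exists_add hcz
        obtain ⟨w, hw, hwlen⟩ := exists_max (hfin t₀)
        -- w + d is a factorization of s
        have hwd : w + d ∈ ZSet s := by
          constructor
          · intro x hx
            rcases Finset.mem_union.mp (Finsupp.support_add hx) with h | h
            · exact hw.1 x h
            · exact hz.1 x (support_subset_of_add hd h)
          · apply red_cancel (a := m)
            have h1 : cls m + (cls t₀ + phi d) = cls s + cls m := by
              rw [← add_assoc, ← cls_add, ht₀, hs₀, ← cls_add, ← hz.2, hd, phi_add]
            rw [phi_add, hw.2, h1, add_comm (cls s) (cls m)]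
        have hkey : flen z ≤ flen (w + d) + 1 := by
          have h1 : flen c ≤ lenL s₀ := le_lenL (hfin s₀) hcZ
          have h2 : flen z = flen c + flen d := by rw [hd, flen_add]
          rw [flen_add, hwlen]
          omega
        exact le_trans hkey (Nat.add_le_add_right (le_lenL (hfin s) hwd) 1)
    · -- lenL s + 1 ≤ lenL (s + m)
      obtain ⟨w, hw, hwlen⟩ := exists_max (hfin s)
      have hwm : w + Finsupp.single (cls m) 1 ∈ ZSet (s + m) := by
        constructor
        · intro x hx
          rcases Finset.mem_union.mp (Finsupp.support_add hx) with h | h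
          · exact hw.1 x h
          · have := Finsupp.support_single_subset h
            simp only [Finset.mem_singleton] at this
            rw [this]; exact hmred
        · rw [phi_add, hw.2, phi_single, one_smul, cls_add]
      have := le_lenL (hfin (s + m)) hwm
      rw [flen_add, flen_single, hwlen] at this
      exact this

end Paper
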